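/- Let R be a Noetherian domain and E a finitely generated torsion-free R-module such that E[x^{-1}] is free over R[x^{-1}] for a nonzero x ∈ R. Then E contains a free submodule F with x^s(E/F) = 0 for some s ≥ 0. -/

import Mathlib

/-- Let `R` be a Noetherian domain and `E` a finitely generated
torsion-free `R`-module such that `E[x⁻¹]` is free over `R[x⁻¹]` for a nonzero `x ∈ R`.
Then `E` contains a free submodule `F` with `xˢ (E/F) = 0` for some `s ≥ 0`. -/
theorem stmt17 (R : Type) [CommRing R] [IsDomain R] [IsNoetherianRing R]
    (x : R) (hx : x ≠ 0)
    (E : Type) [AddCommGroup E] [Module R E] [Module.Finite R E] [NoZeroSMulDivisors R E]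
    (hfree : Module.Free (Localization (Submonoid.powers x))
      (LocalizedModule (Submonoid.powers x) E)) :
    ∃ F : Submodule R E, Module.Free R F ∧ ∃ s : ℕ, ∀ m : E ⧸ F, (x ^ s) • m = 0 := by
  classical
  set S := Submonoid.powers x with hS
  set Rₛ := Localization S
  set Eₛ := LocalizedModule S E
  set f : E →ₗ[R] Eₛ := LocalizedModule.mkLinearMap S E with hf
  -- elements of S are nonzero
  have hSne : ∀ s : S, (s : R) ≠ 0 := by
    rintro ⟨s, n, rfl⟩ h
    exact hx (pow_eq_zero_iff'.mp h).1
  -- f is injective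
  have hfinj : Function.Injective f := by
    intro a b hab
    have : LocalizedModule.mk a (1 : S) = LocalizedModule.mk b 1 := hab
    rw [LocalizedModule.mk_eq] at this
    obtain ⟨u, hu⟩ := this
    simp only [one_smul] at hu
    have hu' : (u : R) • a = (u : R) • b := hu
    have : (u : R) • (a - b) = 0 := by rw [smul_sub, hu', sub_self]
    rcases smul_eq_zero.mp this with h | h
    · exact absurd h (hSne u)
    · exact sub_eq_zero.mp h
  have : Module.Finite Rₛ Eₛ := Module.Finite.of_isLocalizedModule S f
  -- choose a basis
  let ι := Module.Free.ChooseBasisIndex Rₛ Eₛ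
  let b : Module.Basis ι Rₛ Eₛ := Module.Free.chooseBasis Rₛ Eₛ
  -- represent basis vectors with denominators
  have hsur : ∀ i : ι, ∃ p : E × S, IsLocalizedModule.mk' f p.1 p.2 = b i := fun i =>
    IsLocalizedModule.mk'_surjective S f (b i)
  choose p hp using hsur
  let e : ι → E := fun i => (p i).1
  -- units of denominators
  let u : ι → Rₛˣ := fun i =>
    (IsLocalization.map_units Rₛ ((p i).2 : S)).unit
  let b' : Module.Basis ι Rₛ Eₛ := b.unitsSMul u
  have hb' : ∀ i, b' i = f (e i) := by
    intro i
    rw [Module.Basis.unitsSMul_apply, Units.smul_def]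
    have : (u i : Rₛ) • b i = algebraMap R Rₛ ((p i).2 : R) • b i := rfl
    rw [this, algebraMap_smul, ← hp i, ← Submonoid.smul_def, IsLocalizedModule.mk'_cancel']
  -- algebraMap R Rₛ is injective
  have halg : Function.Injective (algebraMap R Rₛ) :=
    IsLocalization.injective Rₛ (powers_le_nonZeroDivisors_of_noZeroDivisors hx)
  -- e is linearly independent over R
  have hliR : LinearIndependent R (f ∘ e) := by
    have h1 : LinearIndependent Rₛ (f ∘ e) := by
      have := b'.linearIndependent
      convert this using 1
      ext i
      exact (hb' i).symm
    refine h1.restrict_scalars ?_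
    intro r r' h
    apply halg
    simpa [Algebra.algebraMap_eq_smul_one] using h
  have hlie : LinearIndependent R e := hliR.of_comp f
  refine ⟨Submodule.span R (Set.range e), Module.Free.of_basis (Module.Basis.span hlie), ?_⟩
  -- torsion part
  obtain ⟨T, hT⟩ := Module.Finite.fg_top (R := R) (M := E)
  -- for each g : E there are n, coefficients with x^n • g ∈ span
  have key : ∀ g : E, ∃ n : ℕ, x ^ n • g ∈ Submodule.span R (Set.range e) := by
    intro g
    have hg : f g ∈ Submodule.span Rₛ (Set.range b') := by
      rw [b'.span_eq]; trivial
    rw [Finsupp.mem_span_range_iff_exists_finsupp] at hg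
    obtain ⟨c, hc⟩ := hg
    obtain ⟨t, ht⟩ := IsLocalization.exist_integer_multiples S c.support c
    choose a ha using ht
    obtain ⟨n, hn⟩ := t.2
    refine ⟨n, ?_⟩
    have h1 : (t : R) • f g = f (∑ i ∈ c.support.attach, a i i.2 • e i) := by
      rw [← hc, Finsupp.sum, ← Finset.sum_attach c.support (fun i => c i • b' i),
        Finset.smul_sum, map_sum]
      refine Finset.sum_congr rfl fun i _ => ?_
      rw [hb', ← smul_assoc, ← ha ↑i i.2, algebraMap_smul, ← map_smul]
    have hn' : x ^ n = (t : R) := hn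
    have h2 : x ^ n • g = ∑ i ∈ c.support.attach, a i i.2 • e i := by
      apply hfinj
      rw [map_smul, hn']
      exact h1
    rw [h2]
    exact Submodule.sum_mem _ fun i _ =>
      Submodule.smul_mem _ _ (Submodule.subset_span ⟨i, rfl⟩)
  choose n hn using key
  set F := Submodule.span R (Set.range e)
  set N := T.sup n with hN
  have hNg : ∀ g ∈ T, x ^ N • g ∈ F := by
    intro g hg
    have hle : n g ≤ N := Finset.le_sup hg
    have : x ^ N • g = x ^ (N - n g) • (x ^ (n g) • g) := by
      rw [smul_smul, ← pow_add, Nat.sub_add_cancel hle]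
    rw [this]
    exact Submodule.smul_mem _ _ (hn g)
  have hall : ∀ g : E, x ^ N • g ∈ F := by
    have : Submodule.span R (T : Set E) ≤ F.comap (LinearMap.lsmul R E (x ^ N)) := by
      rw [Submodule.span_le]
      intro g hg
      exact hNg g hg
    intro g
    have hg : g ∈ Submodule.span R (T : Set E) := by rw [hT]; trivial
    exact this hg
  refine ⟨N, fun m => ?_⟩
  obtain ⟨g, rfl⟩ := Submodule.Quotient.mk_surjective F m
  rw [← Submodule.Quotient.mk_smul, Submodule.Quotient.mk_eq_zero]
  exact hall g
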